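/- Let κ, λ be infinite cardinals and {X_α : α < λ} a family of compact Hausdorff spaces with t₀(X_α) ≤ κ for every α < λ. Then every κ-continuous function f : ∏_{α<λ} X_α → ℝ is σ-continuous, i.e., its restriction to every σ-product in ∏_{α<λ} X_α is continuous. -/

import Mathlib

open Cardinal Set

open Filter Topology Function

universe u

private lemma mk_insert_le' {κ : Cardinal.{u}} {α : Type u} (hκ : Cardinal.aleph0 ≤ κ)
    {s : Set α} (h : #s ≤ κ) (a : α) : #(insert a s : Set α) ≤ κ :=
  Cardinal.mk_insert_le.trans (by
    calc #s + 1 ≤ κ + 1 := by gcongr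
    _ = κ := Cardinal.add_one_eq hκ)

private lemma mk_prod_le' {κ : Cardinal.{u}} {α β : Type u} (hκ : Cardinal.aleph0 ≤ κ)
    {s : Set α} {t : Set β} (hs : #s ≤ κ) (ht : #t ≤ κ) : #(s ×ˢ t : Set (α × β)) ≤ κ := by
  calc #(s ×ˢ t : Set (α × β)) = #s * #t := by
        rw [Cardinal.mk_congr (Equiv.Set.prod s t)]
        simp [Cardinal.mk_prod]
  _ ≤ κ * κ := mul_le_mul' hs ht
  _ = κ := Cardinal.mul_eq_self hκ

open Classical in
private noncomputable def maxval {β : Type u} (u : β → ℝ) : ℝ :=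
  if H : ∃ t, ∀ t', u t' ≤ u t then u H.choose else 0

private lemma maxval_spec {β : Type u} (u : β → ℝ) (H : ∃ t, ∀ t', u t' ≤ u t) :
    (∀ t, u t ≤ maxval u) ∧ ∃ t, maxval u = u t := by
  unfold maxval
  rw [dif_pos H]
  exact ⟨H.choose_spec, ⟨H.choose, rfl⟩⟩

/-- The maximum over a compact family of a κ-continuous function is κ-continuous. -/
private lemma maxcont {κ : Cardinal.{u}} (hκ : Cardinal.aleph0 ≤ κ)
    {T P : Type u} [TopologicalSpace T] [TopologicalSpace P] [CompactSpace T] [Nonempty T]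
    (q : P → T → ℝ)
    (hqc : ∀ x, Continuous (q x))
    (hqk : ∀ (D : Set T) (B : Set P), #D ≤ κ → #B ≤ κ →
      ContinuousOn (fun p : T × P => q p.2 p.1) (D ×ˢ B)) :
    ∀ B : Set P, #B ≤ κ → ContinuousOn (fun x => maxval (q x)) B := by
  have hex : ∀ x : P, ∃ t, ∀ t', q x t' ≤ q x t := by
    intro x
    obtain ⟨t, -, ht⟩ := isCompact_univ.exists_isMaxOn univ_nonempty (hqc x).continuousOn
    exact ⟨t, fun t' => ht (mem_univ t')⟩
  have hm1 : ∀ x t, q x t ≤ maxval (q x) := fun x => (maxval_spec _ (hex x)).1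
  have hm2 : ∀ x, ∃ t, maxval (q x) = q x t := fun x => (maxval_spec _ (hex x)).2
  intro B hB b₀ hb₀
  show Tendsto _ (𝓝[B] b₀) (𝓝 (maxval (q b₀)))
  rw [Metric.tendsto_nhds]
  intro δ hδ
  by_contra hcon
  have hfreq : ∃ᶠ b in 𝓝[B] b₀, δ ≤ dist (maxval (q b)) (maxval (q b₀)) := by
    simpa [not_lt] using Filter.not_eventually.mp hcon
  have hEsub : {b | δ ≤ dist (maxval (q b)) (maxval (q b₀))} ⊆
      {b | maxval (q b₀) + δ ≤ maxval (q b)} ∪ {b | maxval (q b) ≤ maxval (q b₀) - δ} := by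
    intro b hb
    rcases le_abs.mp (by simpa [Real.dist_eq] using hb) with h1 | h1
    · left; simp only [mem_setOf_eq]; linarith
    · right; simp only [mem_setOf_eq]; linarith
  have hneb : (𝓝[B ∩ ({b | maxval (q b₀) + δ ≤ maxval (q b)} ∪
      {b | maxval (q b) ≤ maxval (q b₀) - δ})] b₀).NeBot := by
    have h1 : (𝓝[B] b₀ ⊓ 𝓟 {b | δ ≤ dist (maxval (q b)) (maxval (q b₀))}).NeBot :=
      Filter.frequently_iff_neBot.mp hfreq
    have h2 : 𝓝[B] b₀ ⊓ 𝓟 {b | δ ≤ dist (maxval (q b)) (maxval (q b₀))} ≤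
        𝓝[B ∩ ({b | maxval (q b₀) + δ ≤ maxval (q b)} ∪
          {b | maxval (q b) ≤ maxval (q b₀) - δ})] b₀ := by
      rw [nhdsWithin_inter' b₀]
      exact inf_le_inf le_rfl (principal_mono.mpr hEsub)
    exact h1.mono h2
  rw [inter_union_distrib_left, nhdsWithin_union] at hneb
  rcases sup_neBot.mp hneb with hL | hL
  · -- case E⁺
    haveI : (𝓝[B ∩ {b | maxval (q b₀) + δ ≤ maxval (q b)}] b₀).NeBot := hL
    have hEpB : (B ∩ {b | maxval (q b₀) + δ ≤ maxval (q b)}) ⊆ B := inter_subset_left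
    have hEpcard : #(B ∩ {b | maxval (q b₀) + δ ≤ maxval (q b)} : Set P) ≤ κ :=
      (Cardinal.mk_le_mk_of_subset hEpB).trans hB
    set Ep := B ∩ {b | maxval (q b₀) + δ ≤ maxval (q b)} with hEpdef
    set tb : P → T := fun b => (hm2 b).choose with htbdef
    set L := 𝓝[Ep] b₀ with hLdef
    set Ψ : P → T × P := fun b => (tb b, b) with hΨdef
    have htb : ∀ b, maxval (q b) = q b (tb b) := fun b => (hm2 b).choose_spec
    haveI : (Filter.map tb L).NeBot := hL.map _
    obtain ⟨ts, hts⟩ := exists_clusterPt_of_compactSpace (Filter.map tb L)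
    have hD'card : #(insert ts (tb '' Ep) : Set T) ≤ κ :=
      mk_insert_le' hκ (Cardinal.mk_image_le.trans hEpcard) _
    have hB'card : #(insert b₀ Ep : Set P) ≤ κ := mk_insert_le' hκ hEpcard _
    have hQ : ContinuousOn (fun p : T × P => q p.2 p.1)
        ((insert ts (tb '' Ep)) ×ˢ (insert b₀ Ep)) := hqk _ _ hD'card hB'card
    have hmemA : (ts, b₀) ∈ (insert ts (tb '' Ep)) ×ˢ (insert b₀ Ep) :=
      ⟨mem_insert _ _, mem_insert _ _⟩
    have hNneb : (𝓝 (ts, b₀) ⊓ Filter.map Ψ L).NeBot := by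
      rw [Filter.neBot_iff]
      intro hbot
      rw [Filter.inf_eq_bot_iff] at hbot
      obtain ⟨U, hU, V, hV, hUV⟩ := hbot
      rw [mem_nhds_prod_iff] at hU
      obtain ⟨U₁, hU₁, U₂, hU₂, hprod⟩ := hU
      have hS : Ψ ⁻¹' V ∩ U₂ ∈ L := inter_mem (mem_map.mp hV) (nhdsWithin_le_nhds hU₂)
      have hTS : tb '' (Ψ ⁻¹' V ∩ U₂) ∈ Filter.map tb L := image_mem_map hS
      have hnon : (U₁ ∩ tb '' (Ψ ⁻¹' V ∩ U₂)).Nonempty := by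
        have := hts
        rw [ClusterPt] at this
        exact Filter.nonempty_of_mem (inter_mem_inf hU₁ hTS)
      obtain ⟨t₁, ht₁U, b, hb, htb1⟩ := hnon
      have : Ψ b ∈ U ∩ V := by
        constructor
        · apply hprod
          exact ⟨show tb b ∈ U₁ by rw [htb1]; exact ht₁U, hb.2⟩
        · exact hb.1
      rw [hUV] at this
      exact this
    have hle : 𝓝 (ts, b₀) ⊓ Filter.map Ψ L ≤
        𝓝[(insert ts (tb '' Ep)) ×ˢ (insert b₀ Ep)] (ts, b₀) := by
      refine le_inf inf_le_left (inf_le_right.trans ?_)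
      rw [Filter.le_principal_iff, Filter.mem_map]
      filter_upwards [self_mem_nhdsWithin] with b hb
      exact ⟨mem_insert_of_mem _ (mem_image_of_mem _ hb), mem_insert_of_mem _ hb⟩
    haveI := hNneb
    have htend : Tendsto (fun p : T × P => q p.2 p.1) (𝓝 (ts, b₀) ⊓ Filter.map Ψ L)
        (𝓝 (q b₀ ts)) := (hQ _ hmemA).mono_left hle
    have hev : ∀ᶠ p in 𝓝 (ts, b₀) ⊓ Filter.map Ψ L,
        maxval (q b₀) + δ ≤ (fun p : T × P => q p.2 p.1) p := by
      refine Filter.Eventually.filter_mono inf_le_right ?_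
      rw [Filter.eventually_map]
      filter_upwards [self_mem_nhdsWithin] with b hb
      have h2 : maxval (q b₀) + δ ≤ maxval (q b) := hb.2
      exact le_of_le_of_eq h2 (htb b)
    have h1 : maxval (q b₀) + δ ≤ q b₀ ts := ge_of_tendsto htend hev
    have h2 : q b₀ ts ≤ maxval (q b₀) := hm1 b₀ ts
    linarith
  · -- case E⁻
    haveI : (𝓝[B ∩ {b | maxval (q b) ≤ maxval (q b₀) - δ}] b₀).NeBot := hL
    set Em := B ∩ {b | maxval (q b) ≤ maxval (q b₀) - δ} with hEmdef
    have hEmcard : #(Em : Set P) ≤ κ :=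
      (Cardinal.mk_le_mk_of_subset inter_subset_left).trans hB
    obtain ⟨t₀, ht₀⟩ := hm2 b₀
    have hQ : ContinuousOn (fun p : T × P => q p.2 p.1)
        (({t₀} : Set T) ×ˢ (insert b₀ Em)) :=
      hqk _ _ ((Cardinal.mk_le_aleph0_iff.mpr (by infer_instance)).trans hκ)
        (mk_insert_le' hκ hEmcard _)
    have hmemA : (t₀, b₀) ∈ ({t₀} : Set T) ×ˢ (insert b₀ Em) := ⟨rfl, mem_insert _ _⟩
    have hΦ : Tendsto (fun b : P => ((t₀, b) : T × P)) (𝓝[Em] b₀)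
        (𝓝[({t₀} : Set T) ×ˢ (insert b₀ Em)] (t₀, b₀)) := by
      rw [tendsto_nhdsWithin_iff]
      constructor
      · exact (continuous_const.prodMk continuous_id).tendsto b₀ |>.mono_left
          nhdsWithin_le_nhds
      · filter_upwards [self_mem_nhdsWithin] with b hb
        exact ⟨rfl, mem_insert_of_mem _ hb⟩
    have htend : Tendsto (fun b => q b t₀) (𝓝[Em] b₀) (𝓝 (q b₀ t₀)) :=
      Filter.Tendsto.comp (hQ _ hmemA) hΦ
    have hev : ∀ᶠ b in 𝓝[Em] b₀, q b t₀ ≤ maxval (q b₀) - δ := by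
      filter_upwards [self_mem_nhdsWithin] with b hb
      exact (hm1 b t₀).trans hb.2
    have h1 : q b₀ t₀ ≤ maxval (q b₀) - δ := le_of_tendsto htend hev
    rw [← ht₀] at h1
    linarith

/-- Every κ-continuous function on the product which factors through the retraction onto a
finite subproduct (relative to a base point `a`) is continuous. -/
private lemma pfin {κ : Cardinal.{u}} (hκ : Cardinal.aleph0 ≤ κ)
    {ι : Type u} [DecidableEq ι] {X : ι → Type u} [∀ i, TopologicalSpace (X i)]
    [∀ i, CompactSpace (X i)]
    (hne : ∀ i, Nonempty (X i))
    (ht0 : ∀ i, ∀ g : X i → ℝ,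
      (∀ A : Set (X i), #A ≤ κ → Continuous (A.restrict g)) → Continuous g)
    (a : ∀ i, X i) (F : Finset ι) :
    ∀ g : (∀ i, X i) → ℝ,
      (∀ p, g (fun i => if i ∈ F then p i else a i) = g p) →
      (∀ A : Set (∀ i, X i), #A ≤ κ → ContinuousOn g A) →
      Continuous g := by
  induction F using Finset.induction_on with
  | empty =>
    intro g hg hk
    have hgc : g = fun _ => g (fun i => a i) := funext fun p => by
      simpa using (hg p).symm
    rw [hgc]; exact continuous_const
  | @insert j F hj IH =>
    intro g hg hk
    haveI : Nonempty (X j) := hne j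
    have hupd_cont : ∀ y : ∀ i, X i, Continuous fun t : X j => Function.update y j t :=
      fun y => (continuous_const (y := y)).update j continuous_id
    have hslice : ∀ y : ∀ i, X i, Continuous fun t : X j => g (Function.update y j t) := by
      intro y
      apply ht0 j
      intro D hD
      apply continuousOn_iff_continuous_domRestrict.mp
      exact ((hk _ (Cardinal.mk_image_le.trans hD)).comp
        (hupd_cont y).continuousOn (mapsTo_image _ _) :
          ContinuousOn (g ∘ fun t => Function.update y j t) D)
    rw [continuous_iff_continuousAt]
    intro x₀
    -- the auxiliary function q and its max h
    have hqc : ∀ x : ∀ i, X i, Continuous fun t : X j =>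
        |g (Function.update x j t) - g (Function.update x₀ j t)| :=
      fun x => ((hslice x).sub (hslice x₀)).abs
    have hqk : ∀ (D : Set (X j)) (B : Set (∀ i, X i)), #D ≤ κ → #B ≤ κ →
        ContinuousOn (fun p : X j × (∀ i, X i) =>
          |g (Function.update p.2 j p.1) - g (Function.update x₀ j p.1)|) (D ×ˢ B) := by
      intro D B hD hB
      have c1 : Continuous fun p : X j × (∀ i, X i) => Function.update p.2 j p.1 :=
        continuous_snd.update j continuous_fst
      have c2 : Continuous fun p : X j × (∀ i, X i) => Function.update x₀ j p.1 :=
        (continuous_const (y := x₀)).update j continuous_fst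
      have hDB : #(D ×ˢ B : Set (X j × (∀ i, X i))) ≤ κ := mk_prod_le' hκ hD hB
      exact (((hk _ (Cardinal.mk_image_le.trans hDB)).comp c1.continuousOn
          (mapsTo_image _ _)).sub
        ((hk _ (Cardinal.mk_image_le.trans hDB)).comp c2.continuousOn
          (mapsTo_image _ _))).abs
    have hk_h : ∀ B : Set (∀ i, X i), #B ≤ κ → ContinuousOn (fun x => maxval
        (fun t : X j => |g (Function.update x j t) - g (Function.update x₀ j t)|)) B :=
      maxcont hκ _ hqc hqk
    -- invariance of q, hence of h, under the retraction r_F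
    have hqr : ∀ x : ∀ i, X i, (fun t : X j =>
        |g (Function.update (fun i => if i ∈ F then x i else a i) j t) -
          g (Function.update x₀ j t)|) = (fun t : X j =>
        |g (Function.update x j t) - g (Function.update x₀ j t)|) := by
      intro x
      funext t
      have main : ∀ z : ∀ i, X i,
          g (Function.update z j t) =
            g (fun i => if i ∈ insert j F then (Function.update z j t) i else a i) :=
        fun z => (hg (Function.update z j t)).symm
      have eqr : (fun i => if i ∈ insert j F then
            (Function.update (fun i' => if i' ∈ F then x i' else a i') j t) i else a i)
          = (fun i => if i ∈ insert j F then (Function.update x j t) i else a i) := by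
        funext i
        by_cases hij : i = j
        · subst hij
          simp [Function.update_self]
        · by_cases hiF : i ∈ F <;>
            simp [Function.update_of_ne hij, Finset.mem_insert, hij, hiF]
      rw [main (fun i => if i ∈ F then x i else a i), main x, eqr]
    have hg_h : ∀ x : ∀ i, X i, (fun x => maxval
        (fun t : X j => |g (Function.update x j t) - g (Function.update x₀ j t)|))
          (fun i => if i ∈ F then x i else a i) = maxval
        (fun t : X j => |g (Function.update x j t) - g (Function.update x₀ j t)|) := by
      intro x
      simp only
      rw [hqr]
    -- h is continuous by the inductive hypothesis
    have hcont_h : Continuous (fun x => maxval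
        (fun t : X j => |g (Function.update x j t) - g (Function.update x₀ j t)|)) :=
      IH _ hg_h hk_h
    -- max is attained and bounds q
    have hex : ∀ x : ∀ i, X i, ∃ t, ∀ t',
        |g (Function.update x j t') - g (Function.update x₀ j t')| ≤
        |g (Function.update x j t) - g (Function.update x₀ j t)| := by
      intro x
      obtain ⟨t, -, ht⟩ := isCompact_univ.exists_isMaxOn univ_nonempty (hqc x).continuousOn
      exact ⟨t, fun t' => ht (mem_univ t')⟩
    have hm1 : ∀ x t, |g (Function.update x j t) - g (Function.update x₀ j t)| ≤ maxval
        (fun t : X j => |g (Function.update x j t) - g (Function.update x₀ j t)|) :=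
      fun x => (maxval_spec _ (hex x)).1
    have hm2 : ∀ x, ∃ t, maxval
        (fun t : X j => |g (Function.update x j t) - g (Function.update x₀ j t)|) =
        |g (Function.update x j t) - g (Function.update x₀ j t)| :=
      fun x => (maxval_spec _ (hex x)).2
    have hx0 : maxval
        (fun t : X j => |g (Function.update x₀ j t) - g (Function.update x₀ j t)|) = 0 := by
      obtain ⟨t, ht⟩ := hm2 x₀
      rw [ht]; simp
    -- conclude continuity at x₀
    have hbd : ∀ p : ∀ i, X i, dist (g p) (g x₀) ≤ maxval
        (fun t : X j => |g (Function.update p j t) - g (Function.update x₀ j t)|) +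
        |g (Function.update x₀ j (p j)) - g x₀| := by
      intro p
      have e1 : Function.update p j (p j) = p := Function.update_eq_self j p
      have h1 : |g p - g (Function.update x₀ j (p j))| ≤ maxval
          (fun t : X j => |g (Function.update p j t) - g (Function.update x₀ j t)|) := by
        have := hm1 p (p j)
        rwa [e1] at this
      calc dist (g p) (g x₀) = |g p - g x₀| := Real.dist_eq _ _
        _ ≤ |g p - g (Function.update x₀ j (p j))| +
            |g (Function.update x₀ j (p j)) - g x₀| := abs_sub_le _ _ _
        _ ≤ _ := add_le_add_left h1 _
    have t2 : Tendsto (fun p : ∀ i, X i => |g (Function.update x₀ j (p j)) - g x₀|)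
        (𝓝 x₀) (𝓝 0) := by
      have c : Continuous fun p : ∀ i, X i => |g (Function.update x₀ j (p j)) - g x₀| :=
        (((hslice x₀).comp (continuous_apply j)).sub continuous_const).abs
      have e : |g (Function.update x₀ j (x₀ j)) - g x₀| = 0 := by
        rw [Function.update_eq_self]; simp
      simpa [e] using c.tendsto x₀
    have t1 : Tendsto (fun p : ∀ i, X i => maxval
        (fun t : X j => |g (Function.update p j t) - g (Function.update x₀ j t)|))
        (𝓝 x₀) (𝓝 0) := by
      have t0 := hcont_h.tendsto x₀
      rwa [hx0] at t0
    have hsq : Tendsto (fun p => dist (g p) (g x₀)) (𝓝 x₀) (𝓝 0) := by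
      refine squeeze_zero (fun _ => dist_nonneg) hbd ?_
      simpa using t1.add t2
    exact tendsto_iff_dist_tendsto_zero.mpr hsq

private def retr {ι : Type u} [DecidableEq ι] {X : ι → Type u} (a : ∀ i, X i)
    (F : Finset ι) (p : ∀ i, X i) : ∀ i, X i :=
  fun i => if i ∈ F then p i else a i

private lemma retr_retr {ι : Type u} [DecidableEq ι] {X : ι → Type u} (a : ∀ i, X i)
    (F : Finset ι) (p : ∀ i, X i) : retr a F (retr a F p) = retr a F p := by
  funext i
  simp only [retr]
  split_ifs <;> rfl

private lemma continuous_retr {ι : Type u} [DecidableEq ι] {X : ι → Type u}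
    [∀ i, TopologicalSpace (X i)] (a : ∀ i, X i) (F : Finset ι) :
    Continuous (retr a (X := X) F) := by
  apply continuous_pi
  intro i
  simp only [retr]
  split_ifs
  · exact continuous_apply i
  · exact continuous_const

/-- Every κ-continuous real-valued function on a product of compacta of functional
tightness ≤ κ is σ-continuous. -/
theorem kappaContinuous_is_sigmaContinuous
    (κ : Cardinal.{u}) (hκ : Cardinal.aleph0 ≤ κ)
    {ι : Type u} [Infinite ι]
    {X : ι → Type u} [∀ i, TopologicalSpace (X i)]
    [∀ i, CompactSpace (X i)] [∀ i, T2Space (X i)]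
    (ht0 : ∀ i, ∀ g : X i → ℝ,
      (∀ A : Set (X i), #A ≤ κ → Continuous (A.restrict g)) → Continuous g)
    (f : (∀ i, X i) → ℝ)
    (hkappa : ∀ A : Set (∀ i, X i), #A ≤ κ → Continuous (A.restrict f)) :
    ∀ a : ∀ i, X i,
      Continuous (({x : ∀ i, X i | {i | x i ≠ a i}.Finite}).restrict f) := by
  classical
  intro a
  apply continuousOn_iff_continuous_domRestrict.mp
  by_cases hPne : Nonempty (∀ i, X i)
  swap
  · intro x hx
    exact (hPne ⟨x⟩).elim
  have hne : ∀ i, Nonempty (X i) := fun i => ⟨hPne.some i⟩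
  have hk : ∀ A : Set (∀ i, X i), #A ≤ κ → ContinuousOn f A := fun A hA =>
    continuousOn_iff_continuous_restrict.mpr (hkappa A hA)
  -- continuity of the composition with finite retractions
  have hφ : ∀ F : Finset ι, Continuous fun p => f (retr a F p) := by
    intro F
    apply pfin hκ hne ht0 a F
    · intro p
      exact congrArg f (retr_retr a F p)
    · intro A hA
      exact ((hk _ (Cardinal.mk_image_le.trans hA)).comp
        (continuous_retr a F).continuousOn (mapsTo_image _ _) :
          ContinuousOn (f ∘ retr a F) A)
  intro x hx
  by_contra hcont
  have hnt : ¬ Tendsto f (𝓝[{x : ∀ i, X i | {i | x i ≠ a i}.Finite}] x) (𝓝 (f x)) := hcont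
  rw [Metric.tendsto_nhds] at hnt
  push_neg at hnt
  obtain ⟨ε, hε, hfr⟩ := hnt
  have hbad : ∀ U ∈ 𝓝 x, ∃ b, b ∈ U ∧ {i | b i ≠ a i}.Finite ∧ ε ≤ |f b - f x| := by
    intro U hU
    have hU' : U ∩ {x : ∀ i, X i | {i | x i ≠ a i}.Finite} ∈
        𝓝[{x : ∀ i, X i | {i | x i ≠ a i}.Finite}] x :=
      inter_mem (nhdsWithin_le_nhds hU) self_mem_nhdsWithin
    obtain ⟨b, hbU, hbd⟩ := Filter.frequently_iff.mp hfr hU'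
    exact ⟨b, hbU.1, hbU.2, by rwa [Real.dist_eq] at hbd⟩
  have hx' : ({i | x i ≠ a i}).Finite := hx
  -- base finite support
  have hretrx : ∀ F : Finset ι, hx'.toFinset ⊆ F → retr a F x = x := by
    intro F hF
    funext i
    simp only [retr]
    split_ifs with hi
    · rfl
    · by_contra hne2
      exact hi (hF (hx'.mem_toFinset.mpr fun h => hne2 h.symm))
  -- construct the recursive sequence
  obtain ⟨Fn, Un, y, P1, P2, P3, P4, P5, P6, P7⟩ :
      ∃ (Fn : ℕ → Finset ι) (Un : ℕ → Set (∀ i, X i)) (y : ℕ → ∀ i, X i),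
        (∀ n, hx'.toFinset ⊆ Fn n) ∧ (∀ n, Fn n ⊆ Fn (n + 1)) ∧
        (∀ n, Un (n + 1) ⊆ Un n) ∧
        (∀ n b, b ∈ Un n → |f (retr a (Fn n) b) - f x| < ε / 3) ∧
        (∀ n, y n ∈ Un n) ∧ (∀ n, ε ≤ |f (y n) - f x|) ∧
        (∀ n i, i ∉ Fn (n + 1) → y n i = a i) := by
    have hball : ∀ F : Finset ι, hx'.toFinset ⊆ F →
        (hx'.toFinset ⊆ F ∧ IsOpen {b | |f (retr a F b) - f x| < ε / 3} ∧
          x ∈ {b | |f (retr a F b) - f x| < ε / 3} ∧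
          ∀ b ∈ {b | |f (retr a F b) - f x| < ε / 3},
            |f (retr a F b) - f x| < ε / 3) := by
      intro F hF
      refine ⟨hF, ?_, ?_, fun b hb => hb⟩
      · exact isOpen_lt (((hφ F).sub continuous_const).abs) continuous_const
      · show |f (retr a F x) - f x| < ε / 3
        rw [hretrx F hF]
        simpa using by positivity
    have hstep' : ∀ s : {p : Finset ι × Set (∀ i, X i) //
        hx'.toFinset ⊆ p.1 ∧ IsOpen p.2 ∧ x ∈ p.2 ∧
          ∀ b ∈ p.2, |f (retr a p.1 b) - f x| < ε / 3},
        ∃ t : {p : Finset ι × Set (∀ i, X i) //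
          hx'.toFinset ⊆ p.1 ∧ IsOpen p.2 ∧ x ∈ p.2 ∧
            ∀ b ∈ p.2, |f (retr a p.1 b) - f x| < ε / 3} × (∀ i, X i),
          s.1.1 ⊆ t.1.1.1 ∧ t.1.1.2 ⊆ s.1.2 ∧ t.2 ∈ s.1.2 ∧
            ε ≤ |f t.2 - f x| ∧ ∀ i, i ∉ t.1.1.1 → t.2 i = a i := by
      rintro ⟨⟨F, U⟩, hF0, hUo, hxU, hUb⟩
      obtain ⟨b, hbU, hbfin, hbfar⟩ := hbad U (hUo.mem_nhds hxU)
      have hF0' : hx'.toFinset ⊆ F ∪ hbfin.toFinset := hF0.trans Finset.subset_union_left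
      have hb2 := hball (F ∪ hbfin.toFinset) hF0'
      refine ⟨⟨⟨⟨F ∪ hbfin.toFinset,
        U ∩ {c | |f (retr a (F ∪ hbfin.toFinset) c) - f x| < ε / 3}⟩,
        hF0', hUo.inter hb2.2.1, ⟨hxU, hb2.2.2.1⟩, fun c hc => hc.2⟩, b⟩,
        Finset.subset_union_left, inter_subset_left, hbU, hbfar, ?_⟩
      intro i hi
      by_contra hne2
      exact hi (Finset.mem_union_right _ (hbfin.mem_toFinset.mpr fun h => hne2 h))
    choose step hst1 hst2 hst3 hst4 hst5 using hstep'
    let s0 : {p : Finset ι × Set (∀ i, X i) //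
        hx'.toFinset ⊆ p.1 ∧ IsOpen p.2 ∧ x ∈ p.2 ∧
          ∀ b ∈ p.2, |f (retr a p.1 b) - f x| < ε / 3} :=
      ⟨⟨hx'.toFinset, {b | |f (retr a hx'.toFinset b) - f x| < ε / 3}⟩,
        hball hx'.toFinset (Finset.Subset.refl _)⟩
    let S : ℕ → {p : Finset ι × Set (∀ i, X i) //
        hx'.toFinset ⊆ p.1 ∧ IsOpen p.2 ∧ x ∈ p.2 ∧
          ∀ b ∈ p.2, |f (retr a p.1 b) - f x| < ε / 3} :=
      fun n => Nat.rec s0 (fun _ s => (step s).1) n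
    refine ⟨fun n => (S n).1.1, fun n => (S n).1.2, fun n => (step (S n)).2,
      fun n => (S n).2.1, fun n => hst1 (S n), fun n => hst2 (S n),
      fun n => (S n).2.2.2.2, fun n => hst3 (S n), fun n => hst4 (S n),
      fun n => hst5 (S n)⟩
  -- cluster point of the sequence y
  haveI : (Filter.map y atTop).NeBot := Filter.map_neBot
  obtain ⟨z, hz⟩ := exists_clusterPt_of_compactSpace (Filter.map y atTop)
  have hFmono : ∀ {m n : ℕ}, m ≤ n → Fn m ⊆ Fn n := by
    intro m n hmn
    exact monotone_nat_of_le_succ (f := fun n => Fn n) (fun k => P2 k) hmn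
  have hUanti : ∀ {m n : ℕ}, m ≤ n → Un n ⊆ Un m := by
    intro m n hmn
    exact antitone_nat_of_succ_le (f := fun n => Un n) (fun k => P3 k) hmn
  -- coordinates of z outside all Fn equal a
  have hzout : ∀ i, (∀ n, i ∉ Fn n) → z i = a i := by
    intro i hi
    have hyi : ∀ n, y n i = a i := fun n => P7 n i (hi (n + 1))
    have hmap : ClusterPt (z i) (Filter.map (fun p : ∀ i', X i' => p i)
        (Filter.map y atTop)) :=
      hz.map (continuous_apply i).continuousAt Filter.tendsto_map
    rw [Filter.map_map] at hmap
    have : ((fun p : ∀ i', X i' => p i) ∘ y) = fun _ : ℕ => a i := funext hyi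
    rw [this, Filter.map_const, ← Filter.principal_singleton] at hmap
    have := mem_closure_iff_clusterPt.mpr hmap
    rwa [closure_singleton, mem_singleton_iff] at this
  -- the retracted z converge to z
  have hZ2 : Tendsto (fun n => retr a (Fn n) z) atTop (𝓝 z) := by
    rw [tendsto_pi_nhds]
    intro i
    by_cases hi : ∃ m, i ∈ Fn m
    · obtain ⟨m, hm⟩ := hi
      refine Tendsto.congr' ?_ (tendsto_const_nhds (x := z i))
      filter_upwards [eventually_ge_atTop m] with n hn
      simp only [retr]
      rw [if_pos (hFmono hn hm)]
    · push_neg at hi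
      have : ∀ n, retr a (Fn n) z i = z i := by
        intro n
        simp only [retr]
        rw [if_neg (hi n), hzout i hi]
      refine Tendsto.congr' ?_ (tendsto_const_nhds (x := z i))
      filter_upwards with n
      exact (this n).symm
  -- the countable test set
  have hAcard : #(insert z (range y ∪ range fun n => retr a (Fn n) z) :
      Set (∀ i, X i)) ≤ κ := by
    have hAc : (insert z (range y ∪ range fun n => retr a (Fn n) z) :
        Set (∀ i, X i)).Countable :=
      ((countable_range y).union (countable_range _)).insert z
    haveI := hAc.to_subtype
    exact Cardinal.mk_le_aleph0.trans hκ
  have hA : ContinuousOn f (insert z (range y ∪ range fun n => retr a (Fn n) z)) :=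
    hk _ hAcard
  have hzA : z ∈ (insert z (range y ∪ range fun n => retr a (Fn n) z) :
      Set (∀ i, X i)) := mem_insert _ _
  -- (C1) : f (retr a (Fn n) z) → f z
  have hC1 : Tendsto (fun n => f (retr a (Fn n) z)) atTop (𝓝 (f z)) := by
    have h1 : Tendsto (fun n => retr a (Fn n) z) atTop
        (𝓝[insert z (range y ∪ range fun n => retr a (Fn n) z)] z) := by
      rw [tendsto_nhdsWithin_iff]
      exact ⟨hZ2, Filter.Eventually.of_forall fun n =>
        mem_insert_of_mem _ (mem_union_right _ (mem_range_self n))⟩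
    exact (hA z hzA).tendsto.comp h1
  haveI hNneb : (𝓝 z ⊓ Filter.map y atTop).NeBot := hz
  -- (C2) : each retracted value is ε/3-close to f x
  have hC2 : ∀ k, |f (retr a (Fn k) z) - f x| ≤ ε / 3 := by
    intro k
    have ht : Tendsto (fun b => |f (retr a (Fn k) b) - f x|) (𝓝 z ⊓ Filter.map y atTop)
        (𝓝 (|f (retr a (Fn k) z) - f x|)) :=
      ((((hφ (Fn k)).sub continuous_const).abs).tendsto z).mono_left inf_le_left
    have hev : ∀ᶠ b in 𝓝 z ⊓ Filter.map y atTop, |f (retr a (Fn k) b) - f x| ≤ ε / 3 := by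
      refine Filter.Eventually.filter_mono inf_le_right ?_
      rw [Filter.eventually_map]
      filter_upwards [eventually_ge_atTop k] with n hn
      exact le_of_lt (P4 k (y n) (hUanti hn (P5 n)))
    exact le_of_tendsto ht hev
  -- (C3) : |f z - f x| ≤ ε/3
  have hC3 : |f z - f x| ≤ ε / 3 := by
    have ht : Tendsto (fun n => |f (retr a (Fn n) z) - f x|) atTop (𝓝 (|f z - f x|)) :=
      (hC1.sub tendsto_const_nhds).abs
    exact le_of_tendsto ht (Filter.Eventually.of_forall hC2)
  -- (C4) : ε ≤ |f z - f x|
  have hC4 : ε ≤ |f z - f x| := by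
    have hNA : 𝓝 z ⊓ Filter.map y atTop ≤
        𝓝[insert z (range y ∪ range fun n => retr a (Fn n) z)] z := by
      refine le_inf inf_le_left (inf_le_right.trans ?_)
      rw [Filter.le_principal_iff, Filter.mem_map]
      filter_upwards with n
      exact mem_insert_of_mem _ (mem_union_left _ (mem_range_self n))
    have ht : Tendsto f (𝓝 z ⊓ Filter.map y atTop) (𝓝 (f z)) :=
      (hA z hzA).tendsto.mono_left hNA
    have ht2 : Tendsto (fun b => |f b - f x|) (𝓝 z ⊓ Filter.map y atTop)
        (𝓝 (|f z - f x|)) := (ht.sub tendsto_const_nhds).abs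
    have hev : ∀ᶠ b in 𝓝 z ⊓ Filter.map y atTop, ε ≤ |f b - f x| := by
      refine Filter.Eventually.filter_mono inf_le_right ?_
      rw [Filter.eventually_map]
      filter_upwards with n
      exact P6 n
    exact ge_of_tendsto ht2 hev
  linarith
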